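/- Let (Ω, μ) be a probability space and g : Ω → ℝ a measurable function whose pushforward measure μ∘g⁻¹ is atomless (i.e. g has a continuous distribution). Define G(x) := μ{x' : g(x') ≤ g(x)}. Then for every x ∈ Ω with G(x) < 1, the integral ∫_Ω 𝟙[g(x̃) ≤ g(x)] / μ{x' : g(x') ≥ g(x̃)} dμ(x̃) equals −log(1 − G(x)). -/

import Mathlib

open MeasureTheory

open ProbabilityTheory Set Filter Function

lemma cdf_continuous (ν : Measure ℝ) [IsProbabilityMeasure ν] [NullSingletonClass ν] :
    Continuous (cdf ν) := by
  rw [continuous_iff_continuousAt]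
  intro x
  rw [(monotone_cdf ν).continuousAt_iff_leftLim_eq_rightLim]
  have hr : rightLim (cdf ν) x = cdf ν x :=
    (monotone_cdf ν).continuousWithinAt_Ioi_iff_rightLim_eq.mp
      (((cdf ν).right_continuous x).mono Ioi_subset_Ici_self)
  have hsing : (cdf ν).measure {x} = 0 := by
    rw [measure_cdf]; exact measure_singleton x
  rw [StieltjesFunction.measure_singleton] at hsing
  have h1 : cdf ν x - leftLim (cdf ν) x ≤ 0 := by
    by_contra h
    push_neg at h
    rw [ENNReal.ofReal_eq_zero] at hsing
    linarith
  have h2 : leftLim (cdf ν) x ≤ cdf ν x := (monotone_cdf ν).leftLim_le le_rfl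
  have : leftLim (cdf ν) x = cdf ν x := le_antisymm h2 (by linarith)
  rw [this, hr]

lemma cdf_map_uniform (ν : Measure ℝ) [IsProbabilityMeasure ν] [NullSingletonClass ν] :
    ν.map (cdf ν) = (volume : Measure ℝ).restrict (Icc 0 1) := by
  have hF : Continuous (cdf ν) := cdf_continuous ν
  haveI : IsProbabilityMeasure ((volume : Measure ℝ).restrict (Icc 0 1)) := by
    constructor
    rw [Measure.restrict_apply_univ, Real.volume_Icc]
    norm_num
  haveI : IsProbabilityMeasure (ν.map (cdf ν)) :=
    Measure.isProbabilityMeasure_map hF.measurable.aemeasurable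
  refine Measure.ext_of_Iic _ _ (fun u => ?_)
  rw [Measure.map_apply hF.measurable measurableSet_Iic,
    Measure.restrict_apply measurableSet_Iic]
  rcases lt_or_ge u 0 with hu | hu
  · have h1 : (cdf ν) ⁻¹' Iic u = ∅ := by
      ext t; simp only [mem_preimage, mem_Iic, mem_empty_iff_false, iff_false, not_le]
      exact lt_of_lt_of_le hu (cdf_nonneg ν t)
    have h2 : Iic u ∩ Icc (0:ℝ) 1 = ∅ := by
      ext t; simp only [mem_inter_iff, mem_Iic, mem_Icc, mem_empty_iff_false, iff_false]
      rintro ⟨h3, h4, -⟩; linarith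
    rw [h1, h2]
    simp
  rcases lt_or_ge u 1 with hu1 | hu1
  · -- 0 ≤ u < 1
    have h2 : Iic u ∩ Icc (0:ℝ) 1 = Icc 0 u := by
      ext t; simp only [mem_inter_iff, mem_Iic, mem_Icc]
      constructor
      · rintro ⟨h3, h4, -⟩; exact ⟨h4, h3⟩
      · rintro ⟨h3, h4⟩; exact ⟨h4, h3, le_trans h4 hu1.le⟩
    rw [h2, Real.volume_Icc]
    -- exists b with u < cdf ν b
    obtain ⟨b, hb⟩ : ∃ b, u < cdf ν b :=
      ((tendsto_cdf_atTop ν).eventually (eventually_gt_nhds hu1)).exists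
    by_cases hne : ((cdf ν) ⁻¹' Iic u).Nonempty
    · set A := (cdf ν) ⁻¹' Iic u with hA
      have hclosed : IsClosed A := IsClosed.preimage hF isClosed_Iic
      have hbdd : BddAbove A := by
        refine ⟨b, fun t ht => ?_⟩
        by_contra h
        push_neg at h
        have ht' : cdf ν t ≤ u := ht
        exact absurd ((monotone_cdf ν) h.le) (by intro h'; linarith)
      set a := sSup A with ha
      have haA : a ∈ A := hclosed.csSup_mem hne hbdd
      have hFa : cdf ν a ≤ u := haA
      have hAeq : A = Iic a := by
        ext t
        constructor
        · exact fun ht => le_csSup hbdd ht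
        · intro ht
          simp only [hA, mem_preimage, mem_Iic]
          exact le_trans ((monotone_cdf ν) ht) hFa
      have hFau : cdf ν a = u := by
        refine le_antisymm hFa ?_
        by_contra h
        push_neg at h
        obtain ⟨a', ha'a, ha'⟩ : ∃ a' > a, cdf ν a' < u := by
          have := (hF.continuousAt (x := a)).eventually (eventually_lt_nhds h)
          rcases (Metric.eventually_nhds_iff.mp this) with ⟨ε, hε, hball⟩
          refine ⟨a + ε/2, by linarith, hball ?_⟩
          rw [Real.dist_eq, show a + ε/2 - a = ε/2 by ring, abs_of_pos (by linarith)]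
          linarith
        have : a' ∈ A := le_of_lt ha'
        rw [hAeq] at this
        simp only [mem_Iic] at this
        linarith
      rw [hAeq, sub_zero, ← ofReal_cdf]
      rw [hFau]
    · -- empty: then u ≤ 0, so u = 0
      rw [not_nonempty_iff_eq_empty] at hne
      have hu0 : u ≤ 0 := by
        have hev : ∀ᶠ t in atBot, u ≤ cdf ν t := by
          filter_upwards with t
          by_contra h
          push_neg at h
          have : t ∈ (cdf ν) ⁻¹' Iic u := h.le
          rw [hne] at this
          exact this
        exact ge_of_tendsto (tendsto_cdf_atBot ν) hev
      have : u = 0 := le_antisymm hu0 hu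
      rw [hne, this, sub_zero]
      simp
  · -- u ≥ 1
    have h1 : (cdf ν) ⁻¹' Iic u = univ := by
      ext t; simp only [mem_preimage, mem_Iic, mem_univ, iff_true]
      exact le_trans (cdf_le_one ν t) hu1
    have h2 : Iic u ∩ Icc (0:ℝ) 1 = Icc 0 1 := by
      rw [inter_eq_right]
      exact fun t ht => le_trans ht.2 hu1
    rw [h1, h2, Real.volume_Icc, measure_univ]
    norm_num

lemma calc_integral {v : ℝ} (hv0 : 0 ≤ v) (hv1 : v < 1) :
    ∫ u in Icc (0:ℝ) 1, (if u ≤ v then (1:ℝ) else 0) / (1 - u) = -Real.log (1 - v) := by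
  have hfun : (fun u : ℝ => (if u ≤ v then (1:ℝ) else 0) / (1 - u))
      = Set.indicator (Iic v) (fun u => (1 - u)⁻¹) := by
    funext u
    by_cases h : u ≤ v
    · rw [if_pos h, Set.indicator_of_mem (show u ∈ Iic v from h), one_div]
    · rw [if_neg h, Set.indicator_of_notMem (show u ∉ Iic v from h), zero_div]
  rw [hfun, setIntegral_indicator measurableSet_Iic]
  have hset : Icc (0:ℝ) 1 ∩ Iic v = Icc 0 v := by
    ext t; simp only [mem_inter_iff, mem_Icc, mem_Iic]
    constructor
    · rintro ⟨⟨h1, -⟩, h3⟩; exact ⟨h1, h3⟩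
    · rintro ⟨h1, h3⟩; exact ⟨⟨h1, le_trans h3 hv1.le⟩, h3⟩
  rw [hset, MeasureTheory.integral_Icc_eq_integral_Ioc,
    ← intervalIntegral.integral_of_le hv0]
  rw [show (fun u : ℝ => (1 - u)⁻¹) = (fun u : ℝ => ((1 : ℝ) - u)⁻¹) from rfl]
  have := intervalIntegral.integral_comp_sub_left (a := (0:ℝ)) (b := v)
    (fun x : ℝ => x⁻¹) 1
  rw [this, sub_zero, integral_inv (by
    intro h
    rcases Set.mem_uIcc.mp h with ⟨h1, -⟩ | ⟨h2, -⟩ <;> linarith)]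
  rw [one_div, Real.log_inv]

/-- **Proposition 1.** For a probability space `(Ω, μ)` and a measurable confidence
score `g : Ω → ℝ` with atomless pushforward, writing `G x = μ {x' | g x' ≤ g x}`,
the AURC weight `α(x) = ∫ 𝟙[g x̃ ≤ g x] / μ {x' | g x' ≥ g x̃} dμ(x̃)` equals
`-log (1 - G x)` whenever `G x < 1`. -/
theorem aurc_weight_eq_neg_log {Ω : Type*} [MeasurableSpace Ω]
    (μ : Measure Ω) [IsProbabilityMeasure μ]
    (g : Ω → ℝ) (hg : Measurable g) [NullSingletonClass (μ.map g)]
    (G : Ω → ℝ) (hG : ∀ x, G x = (μ {x' | g x' ≤ g x}).toReal) :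
    ∀ x : Ω, G x < 1 →
      ∫ xt, (if g xt ≤ g x then (1 : ℝ) else 0) / (μ {x' | g xt ≤ g x'}).toReal ∂μ
        = -Real.log (1 - G x) := by
  intro x hx
  set ν := μ.map g with hν
  haveI : IsProbabilityMeasure ν := Measure.isProbabilityMeasure_map hg.aemeasurable
  set F : ℝ → ℝ := fun t => cdf ν t with hFdef
  have hFcont : Continuous F := cdf_continuous ν
  have hFmono : Monotone F := monotone_cdf ν
  set c := g x with hc
  set v := F c with hv
  have hGx : G x = v := by
    rw [hG, hv, hFdef]
    simp only
    rw [cdf_eq_real, measureReal_def]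
    congr 1
    rw [hν, Measure.map_apply hg measurableSet_Iic]
    rfl
  have hv1 : v < 1 := by rw [← hGx]; exact hx
  have hv0 : 0 ≤ v := cdf_nonneg ν c
  have hden : ∀ t : ℝ, (ν (Ici t)).toReal = 1 - F t := by
    intro t
    rw [← compl_Iio, prob_compl_eq_one_sub measurableSet_Iio,
      measure_congr (Iio_ae_eq_Iic' (measure_singleton t)),
      ← ofReal_cdf ν t, ← ENNReal.ofReal_one,
      ← ENNReal.ofReal_sub _ (cdf_nonneg ν t),
      ENNReal.toReal_ofReal (by linarith [cdf_le_one ν t])]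
  have hsets : ∀ t : ℝ, μ {x' | t ≤ g x'} = ν (Ici t) := fun t => by
    rw [hν, Measure.map_apply hg measurableSet_Ici]
    rfl
  set φ : ℝ → ℝ := fun t => (if t ≤ c then (1:ℝ) else 0) / (1 - F t) with hφ
  have hφmeas : Measurable φ :=
    Measurable.div
      (Measurable.ite measurableSet_Iic measurable_const measurable_const)
      (measurable_const.sub hFcont.measurable)
  have hstep1 : (fun xt => (if g xt ≤ g x then (1 : ℝ) else 0) / (μ {x' | g xt ≤ g x'}).toReal)
      = fun xt => φ (g xt) := by
    funext xt
    rw [hsets (g xt), hden (g xt)]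
  rw [hstep1, ← integral_map hg.aemeasurable hφmeas.aestronglyMeasurable]
  set h : ℝ → ℝ := fun u => (if u ≤ v then (1:ℝ) else 0) / (1 - u) with hh
  have hhmeas : Measurable h :=
    Measurable.div
      (Measurable.ite measurableSet_Iic measurable_const measurable_const)
      (measurable_const.sub measurable_id)
  have hnull : ν (F ⁻¹' {v}) = 0 := by
    have h1 : ν (F ⁻¹' {v}) = (ν.map F) {v} :=
      (Measure.map_apply hFcont.measurable (measurableSet_singleton v)).symm
    rw [h1, hFdef]
    rw [show (fun t => (cdf ν) t) = ((cdf ν) : ℝ → ℝ) from rfl, cdf_map_uniform ν,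
      Measure.restrict_apply (measurableSet_singleton v)]
    exact measure_mono_null inter_subset_left Real.volume_singleton
  have hae : ∀ᵐ t ∂ν, φ t = h (F t) := by
    rw [ae_iff]
    refine measure_mono_null ?_ hnull
    intro t ht
    simp only [Set.mem_setOf_eq] at ht
    simp only [Set.mem_preimage, Set.mem_singleton_iff]
    by_cases htc : t ≤ c
    · have hFtv : F t ≤ v := hFmono htc
      exact absurd (by rw [hφ, hh]; simp only [if_pos htc, if_pos hFtv]) ht
    · by_cases hFt : F t ≤ v
      · exact le_antisymm hFt (hFmono (le_of_not_ge htc))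
      · exact absurd (by rw [hφ, hh]; simp only [if_neg htc, if_neg hFt]) ht
  rw [integral_congr_ae hae,
    ← integral_map hFcont.measurable.aemeasurable hhmeas.aestronglyMeasurable]
  rw [hFdef, show (fun t => (cdf ν) t) = ((cdf ν) : ℝ → ℝ) from rfl, cdf_map_uniform ν]
  rw [hGx]
  exact calc_integral hv0 hv1
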